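/- Let c > 0, τ ≠ 0, η, λ, Δt be reals and set the D1Q3 discrete velocities c₀ = 0, c₁ = c, c₂ = −c. Let u : ℝ × ℝ → ℝ be twice continuously differentiable, define f⁰₀ = (1 − η)·u, f⁰₁ = f⁰₂ = (η/2)·u and h₀ = h₁ = (λ/3)·u², h₂ = −(2λ/3)·u², and suppose there exist functions f¹ᵢ, f²ᵢ : ℝ × ℝ → ℝ (i = 0,1,2) and m₁ : ℝ × ℝ → ℝ with Σᵢ f¹ᵢ = 0, Σᵢ f²ᵢ = 0, satisfying for each i and all (x,t) the first-order relation ∂ₓ(cᵢ·f⁰ᵢ) + (1/τ)·f¹ᵢ − hᵢ = 0 and the second-order relation ∂ₜ f⁰ᵢ + ∂ₓ(cᵢ·f¹ᵢ) + (1/2)·∂ₓₓ(cᵢ²·f⁰ᵢ) + (1/τ)·f²ᵢ − m₁/3 = 0 (with cᵢ·f¹ᵢ differentiable in x). Then u recovers the forced Burgers dynamics: for all (x,t), ∂u/∂t + 2·τ·c·λ·u·∂u/∂x + (1/2 − τ)·c²·η·∂²u/∂x² = m₁(x,t). -/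

import Mathlib

/-- with the concrete equilibrium distribution
`f⁰ = ((1−η)u, (η/2)u, (η/2)u)` and compensatory function
`h = ((λ/3)u², (λ/3)u², −(2λ/3)u²)`, the Chapman–Enskog relations recover the
forced Burgers dynamics `u_t + 2τcλ·u·u_x + (1/2 − τ)·c²η·u_xx = m₁`. -/
theorem lbm_recovers_forced_burgers
    (c τ η lam Δt : ℝ) (hc : 0 < c) (hτ : τ ≠ 0)
    (cv : Fin 3 → ℝ) (hcv0 : cv 0 = 0) (hcv1 : cv 1 = c) (hcv2 : cv 2 = -c)
    (u : ℝ → ℝ → ℝ) (hu : ContDiff ℝ 2 (fun p : ℝ × ℝ => u p.1 p.2))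
    (f0 h : Fin 3 → ℝ → ℝ → ℝ)
    (hf00 : ∀ x t, f0 0 x t = (1 - η) * u x t)
    (hf01 : ∀ x t, f0 1 x t = (η / 2) * u x t)
    (hf02 : ∀ x t, f0 2 x t = (η / 2) * u x t)
    (hh0 : ∀ x t, h 0 x t = (lam / 3) * u x t ^ 2)
    (hh1 : ∀ x t, h 1 x t = (lam / 3) * u x t ^ 2)
    (hh2 : ∀ x t, h 2 x t = -(2 * lam / 3) * u x t ^ 2)
    (f1 f2 : Fin 3 → ℝ → ℝ → ℝ) (m1 : ℝ → ℝ → ℝ)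
    (hcons1 : ∀ x t : ℝ, (∑ i : Fin 3, f1 i x t) = 0)
    (hcons2 : ∀ x t : ℝ, (∑ i : Fin 3, f2 i x t) = 0)
    (hdiff1 : ∀ i x t, DifferentiableAt ℝ (fun x' => cv i * f1 i x' t) x)
    (hrel1 : ∀ i x t,
      deriv (fun x' => cv i * f0 i x' t) x + (1 / τ) * f1 i x t - h i x t = 0)
    (hrel2 : ∀ i x t,
      deriv (fun t' => f0 i x t') t
        + deriv (fun x' => cv i * f1 i x' t) x
        + (1 / 2) * deriv (deriv (fun x' => cv i ^ 2 * f0 i x' t)) x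
        + (1 / τ) * f2 i x t - m1 x t / 3 = 0) :
    ∀ x t : ℝ,
      deriv (fun t' => u x t') t
        + 2 * τ * c * lam * u x t * deriv (fun x' => u x' t) x
        + (1 / 2 - τ) * c ^ 2 * η * deriv (deriv (fun x' => u x' t)) x
        = m1 x t := by
  intro x t
  -- differentiability of the slice x' ↦ u x' t and its derivative
  have hux2 : ContDiff ℝ 2 (fun x' : ℝ => u x' t) :=
    hu.comp (contDiff_id.prodMk contDiff_const)
  have hux2' : ContDiff ℝ ((1:ℕ) + 1) (fun x' : ℝ => u x' t) := by exact_mod_cast hux2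
  have hD1 : Differentiable ℝ (fun x' : ℝ => u x' t) :=
    hux2.differentiable (by norm_num)
  have hD2 : Differentiable ℝ (deriv (fun x' : ℝ => u x' t)) :=
    (contDiff_succ_iff_deriv.mp hux2').2.2.differentiable (by norm_num)
  set D : ℝ → ℝ := deriv (fun x' : ℝ => u x' t) with hDdef
  set ux : ℝ := D x with huxdef
  set uxx : ℝ := deriv D x with huxxdef
  set ut : ℝ := deriv (fun t' => u x t') t with hutdef
  have hu' : ∀ x', HasDerivAt (fun y => u y t) (D x') x' := fun x' =>
    (hD1 x').hasDerivAt
  have hD' : HasDerivAt D uxx x := (hD2 x).hasDerivAt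
  -- time derivatives
  have dT1_0 : deriv (fun t' => f0 0 x t') t = (1 - η) * ut := by
    simp only [hf00]; exact deriv_const_mul_field _
  have dT1_1 : deriv (fun t' => f0 1 x t') t = (η / 2) * ut := by
    simp only [hf01]; exact deriv_const_mul_field _
  have dT1_2 : deriv (fun t' => f0 2 x t') t = (η / 2) * ut := by
    simp only [hf02]; exact deriv_const_mul_field _
  -- first-order relation: explicit form of cv i * f1 i
  have hf1 : ∀ (i : Fin 3) (x' : ℝ), f1 i x' t
      = τ * (h i x' t - deriv (fun y => cv i * f0 i y t) x') := by
    intro i x'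
    have h1 := hrel1 i x' t
    field_simp at h1 ⊢
    linarith
  have hder0 : ∀ x', deriv (fun y => cv 0 * f0 0 y t) x' = 0 := by
    intro x'; simp [hcv0]
  have hder1 : ∀ x', deriv (fun y => cv 1 * f0 1 y t) x' = (c * (η / 2)) * D x' := by
    intro x'
    have : (fun y => cv 1 * f0 1 y t) = fun y => (c * (η / 2)) * u y t := by
      funext y; rw [hcv1, hf01]; ring
    rw [this, deriv_const_mul_field]
  have hder2 : ∀ x', deriv (fun y => cv 2 * f0 2 y t) x' = (-c * (η / 2)) * D x' := by
    intro x'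
    have : (fun y => cv 2 * f0 2 y t) = fun y => (-c * (η / 2)) * u y t := by
      funext y; rw [hcv2, hf02]; ring
    rw [this, deriv_const_mul_field]
  -- space derivatives of cv i * f1 i
  have dT2_0 : deriv (fun x' => cv 0 * f1 0 x' t) x = 0 := by
    simp [hcv0]
  have dT2_1 : deriv (fun x' => cv 1 * f1 1 x' t) x
      = c * τ * ((lam / 3) * (2 * u x t * ux) - c * (η / 2) * uxx) := by
    have e : (fun x' => cv 1 * f1 1 x' t)
        = fun x' => c * τ * ((lam / 3) * u x' t ^ 2 - c * (η / 2) * D x') := by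
      funext x'
      rw [hf1 1 x', hder1 x', hh1, hcv1]; ring
    rw [e]
    have H : HasDerivAt (fun x' => c * τ * ((lam / 3) * u x' t ^ 2 - c * (η / 2) * D x'))
        (c * τ * ((lam / 3) * (2 * u x t * ux) - c * (η / 2) * uxx)) x := by
      have h1 : HasDerivAt (fun x' => u x' t ^ 2) (2 * u x t * ux) x := by
        have := (hu' x).fun_pow 2
        simpa using this
      exact ((h1.const_mul (lam / 3)).sub (hD'.const_mul (c * (η / 2)))).const_mul (c * τ)
    exact H.deriv
  have dT2_2 : deriv (fun x' => cv 2 * f1 2 x' t) x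
      = -c * τ * (-(2 * lam / 3) * (2 * u x t * ux) + c * (η / 2) * uxx) := by
    have e : (fun x' => cv 2 * f1 2 x' t)
        = fun x' => -c * τ * (-(2 * lam / 3) * u x' t ^ 2 + c * (η / 2) * D x') := by
      funext x'
      rw [hf1 2 x', hder2 x', hh2, hcv2]; ring
    rw [e]
    have H : HasDerivAt (fun x' => -c * τ * (-(2 * lam / 3) * u x' t ^ 2 + c * (η / 2) * D x'))
        (-c * τ * (-(2 * lam / 3) * (2 * u x t * ux) + c * (η / 2) * uxx)) x := by
      have h1 : HasDerivAt (fun x' => u x' t ^ 2) (2 * u x t * ux) x := by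
        have := (hu' x).fun_pow 2
        simpa using this
      exact ((h1.const_mul (-(2 * lam / 3))).add (hD'.const_mul (c * (η / 2)))).const_mul (-c * τ)
    exact H.deriv
  -- second space derivatives
  have dT3_0 : deriv (deriv (fun x' => cv 0 ^ 2 * f0 0 x' t)) x = 0 := by
    simp [hcv0]
  have dT3_1 : deriv (deriv (fun x' => cv 1 ^ 2 * f0 1 x' t)) x = c ^ 2 * (η / 2) * uxx := by
    have e : (fun x' => cv 1 ^ 2 * f0 1 x' t) = fun x' => c ^ 2 * (η / 2) * u x' t := by
      funext x'; rw [hcv1, hf01]; ring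
    rw [e, deriv_const_mul_field', deriv_const_mul_field]
  have dT3_2 : deriv (deriv (fun x' => cv 2 ^ 2 * f0 2 x' t)) x = c ^ 2 * (η / 2) * uxx := by
    have e : (fun x' => cv 2 ^ 2 * f0 2 x' t) = fun x' => c ^ 2 * (η / 2) * u x' t := by
      funext x'; rw [hcv2, hf02]; ring
    rw [e, deriv_const_mul_field', deriv_const_mul_field]
  -- combine the three second-order relations
  have E0 := hrel2 0 x t
  have E1 := hrel2 1 x t
  have E2 := hrel2 2 x t
  rw [dT1_0, dT2_0, dT3_0] at E0
  rw [dT1_1, dT2_1, dT3_1] at E1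
  rw [dT1_2, dT2_2, dT3_2] at E2
  have S2 := hcons2 x t
  rw [Fin.sum_univ_three] at S2
  have hτ' : (1 / τ) * (f2 0 x t + f2 1 x t + f2 2 x t) = 0 := by rw [S2]; ring
  show ut + 2 * τ * c * lam * u x t * ux + (1 / 2 - τ) * c ^ 2 * η * uxx = m1 x t
  linear_combination E0 + E1 + E2 - hτ'
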